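/- For every binary field F_{2^m} with m ≥ 3, there exists a nonzero element x with tr(x) ≠ tr(x^{-1}), i.e. T_{01} > 0. -/

import Mathlib

private lemma finset_exists_not_mem {F : Type*} [Fintype F] [DecidableEq F]
    (s : Finset F) (h : s.card < Fintype.card F) : ∃ x : F, x ∉ s := by
  by_contra h'
  push_neg at h'
  have : s = Finset.univ := Finset.eq_univ_iff_forall.mpr h'
  simp [this, Finset.card_univ] at h

theorem binary_exists_trace_ne_cotrace (m : ℕ) (hm : 3 ≤ m) (F : Type*) [Field F] [Fintype F]
    [Algebra (ZMod 2) F] (hq : Fintype.card F = 2 ^ m) :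
    (∃ x : F, x ≠ 0 ∧ Algebra.trace (ZMod 2) F x ≠ Algebra.trace (ZMod 2) F x⁻¹) ∧
    0 < Nat.card {x : F | x ≠ 0 ∧ Algebra.trace (ZMod 2) F x = 0 ∧
      Algebra.trace (ZMod 2) F x⁻¹ = 1} := by
  classical
  haveI : CharP F 2 := charP_of_injective_ringHom (algebraMap (ZMod 2) F).injective 2
  haveI : Module.Finite (ZMod 2) F := Module.finite_iff_finite.mpr inferInstance
  set tr := Algebra.trace (ZMod 2) F with htr
  -- key part: existence
  have key : ∃ x : F, x ≠ 0 ∧ tr x ≠ tr x⁻¹ := by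
    by_contra hcon
    push_neg at hcon
    -- trace is surjective, pick c with tr c = 1
    obtain ⟨c, hc⟩ := Algebra.trace_surjective (ZMod 2) F 1
    rw [← htr] at hc
    have hc0 : c ≠ 0 := by
      intro h; rw [h, map_zero] at hc; exact one_ne_zero hc.symm
    -- the main relation
    have rel : ∀ x : F, x ≠ 0 → x ≠ c → tr (x ^ 2 / c + x) = 1 := by
      intro x hx0 hxc
      have hxc' : x + c ≠ 0 := by
        intro h
        apply hxc
        have hcc : c = x + (x + c) := by
          rw [← add_assoc, CharTwo.add_self_eq_zero, zero_add]
        rw [hcc, h, add_zero]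
      have hu0 : x * (x + c) / c ≠ 0 := by
        exact div_ne_zero (mul_ne_zero hx0 hxc') hc0
      have huinv : (x * (x + c) / c)⁻¹ = x⁻¹ + (x + c)⁻¹ := by
        have h : (x * (x + c) / c) * (x⁻¹ + (x + c)⁻¹) = 1 := by
          rw [mul_add]
          have h1 : x * (x + c) / c * x⁻¹ = (x + c) / c := by field_simp
          have h2 : x * (x + c) / c * (x + c)⁻¹ = x / c := by field_simp
          rw [h1, h2, ← add_div]
          have h3 : x + c + x = c := by
            rw [add_comm x c, add_assoc, CharTwo.add_self_eq_zero, add_zero]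
          rw [h3, div_self hc0]
        exact inv_eq_of_mul_eq_one_right h
      have e1 : tr (x * (x + c) / c) = tr x⁻¹ + tr (x + c)⁻¹ := by
        rw [hcon _ hu0, huinv, map_add]
      have e2 : tr x⁻¹ + tr (x + c)⁻¹ = 1 := by
        rw [← hcon _ hx0, ← hcon _ hxc', map_add, ← add_assoc,
          CharTwo.add_self_eq_zero (tr x), zero_add, hc]
      have e3 : x * (x + c) / c = x ^ 2 / c + x := by
        field_simp
      rw [← e3, e1, e2]
    -- additivity of x ↦ tr (x^2/c + x)
    have addh : ∀ x y : F, tr ((x + y) ^ 2 / c + (x + y))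
        = tr (x ^ 2 / c + x) + tr (y ^ 2 / c + y) := by
      intro x y
      rw [← map_add]
      congr 1
      have hsq : (x + y) ^ 2 = x ^ 2 + y ^ 2 := by
        rw [add_sq]
        linear_combination (x * y) * CharTwo.two_eq_zero (R := F)
      rw [hsq]
      field_simp
      ring
    -- pick x ∉ {0, c}, then y ∉ {0, c, x, x + c}
    have hcard : (8 : ℕ) ≤ Fintype.card F := by
      rw [hq]
      calc (8:ℕ) = 2 ^ 3 := by norm_num
      _ ≤ 2 ^ m := Nat.pow_le_pow_right (by norm_num) hm
    have hs1 : ({0, c} : Finset F).card < Fintype.card F := by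
      have : ({0, c} : Finset F).card ≤ 2 := by
        apply le_trans (Finset.card_insert_le _ _); simp
      omega
    obtain ⟨x, hx⟩ := finset_exists_not_mem ({0, c} : Finset F) hs1
    simp only [Finset.mem_insert, Finset.mem_singleton, not_or] at hx
    have hs2 : ({0, c, x, x + c} : Finset F).card < Fintype.card F := by
      have : ({0, c, x, x + c} : Finset F).card ≤ 4 := by
        apply le_trans (Finset.card_insert_le _ _)
        apply Nat.succ_le_succ
        apply le_trans (Finset.card_insert_le _ _)
        apply Nat.succ_le_succ
        apply le_trans (Finset.card_insert_le _ _)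
        simp
      omega
    obtain ⟨y, hy⟩ := finset_exists_not_mem ({0, c, x, x + c} : Finset F) hs2
    simp only [Finset.mem_insert, Finset.mem_singleton, not_or] at hy
    obtain ⟨hy0, hyc, hyx, hyxc⟩ := hy
    have hxy0 : x + y ≠ 0 := by
      intro h
      apply hyx
      have : y = x + (x + y) := by
        rw [← add_assoc, CharTwo.add_self_eq_zero, zero_add]
      rw [this, h, add_zero]
    have hxyc : x + y ≠ c := by
      intro h
      apply hyxc
      have : y = x + (x + y) := by
        rw [← add_assoc, CharTwo.add_self_eq_zero, zero_add]
      rw [this, h]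
    have hcontra := addh x y
    rw [rel x hx.1 hx.2, rel y hy0 hyc, rel (x + y) hxy0 hxyc] at hcontra
    exact absurd hcontra (by decide)
  refine ⟨key, ?_⟩
  obtain ⟨x, hx0, hxne⟩ := key
  have hinv0 : x⁻¹ ≠ 0 := inv_ne_zero hx0
  have hcases : (tr x = 0 ∧ tr x⁻¹ = 1) ∨ (tr x = 1 ∧ tr x⁻¹ = 0) := by
    revert hxne; generalize tr x = a; generalize tr x⁻¹ = b; revert a b; decide
  have hne : Nonempty {x : F | x ≠ 0 ∧ tr x = 0 ∧ tr x⁻¹ = 1} := by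
    rcases hcases with ⟨h1, h2⟩ | ⟨h1, h2⟩
    · exact ⟨⟨x, hx0, h1, h2⟩⟩
    · exact ⟨⟨x⁻¹, hinv0, h2, by rwa [inv_inv]⟩⟩
  exact Nat.card_pos
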